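/- (Basic interpolation bound.) Let (X,d) be a metric space, T ⊆ X, α > 0, and let f : X → [0,∞] be a penalty function with interpolation functional K(t,x) := inf_{y∈X} { f(y) + t·d(x,y) }, minimizers π_t(x) (assumed to exist), and interpolation sets K_t := { π_t(x) : x ∈ T }. Then there is a constant C depending only on α such that for every a > 0, γ_α(T) ≤ C · ( (1/a)·sup_{x∈T} f(x) + Σ_{n≥0} 2^{n/α} e_n(K_{a·2^{n/α}}) ). -/

import Mathlib

open scoped ENNReal NNReal
open EMetric Set

noncomputable section

universe u

/-- Diameter of a set with respect to an extended distance function `D`. -/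
def eDiam {X : Type u} (D : X → X → ℝ≥0∞) (A : Set X) : ℝ≥0∞ :=
  ⨆ x ∈ A, ⨆ y ∈ A, D x y

/-- Entropy numbers: `entN D n A` is the infimum over sets `S` of cardinality
less than `2^(2^n)` of `sup_{x ∈ A} D(x, S)`. -/
def entN {X : Type u} (D : X → X → ℝ≥0∞) (n : ℕ) (A : Set X) : ℝ≥0∞ :=
  ⨅ (S : Finset X) (_ : S.card < 2 ^ 2 ^ n), ⨆ x ∈ A, ⨅ y ∈ S, D x y

/-- An admissible sequence of a set `T`: an increasing (refining) sequence of
partitions of `T`, the `n`-th one having fewer than `2^(2^n)` pieces.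
`piece n x` is the element of the `n`-th partition containing `x`. -/
structure Admissible {X : Type u} (T : Set X) where
  piece : ℕ → X → Set X
  self_mem : ∀ n, ∀ x ∈ T, x ∈ piece n x
  subset_base : ∀ n, ∀ x ∈ T, piece n x ⊆ T
  partition : ∀ n, ∀ x ∈ T, ∀ y ∈ T, y ∈ piece n x → piece n y = piece n x
  finite_pieces : ∀ n, {A : Set X | ∃ x ∈ T, piece n x = A}.Finite
  card_pieces : ∀ n, {A : Set X | ∃ x ∈ T, piece n x = A}.ncard < 2 ^ 2 ^ n
  nested : ∀ n, ∀ x ∈ T, piece (n + 1) x ⊆ piece n x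

/-- The chaining functional `γ_{α,p}(T)` with respect to the extended distance `D`. -/
def gammaF {X : Type u} (D : X → X → ℝ≥0∞) (α p : ℝ) (T : Set X) : ℝ≥0∞ :=
  ⨅ P : Admissible T,
    (⨆ x ∈ T, ∑' n : ℕ, ((2 : ℝ≥0∞) ^ ((n : ℝ) / α) * eDiam D (P.piece n x)) ^ p) ^ p⁻¹

lemma sum_two_pow' (M : ℕ) : ∑ k ∈ Finset.range M, 2^k = 2^M - 1 := by
  induction M with
  | zero => simp
  | succ M ih =>
      rw [Finset.sum_range_succ, ih]
      have h1 : (1:ℕ) ≤ 2^M := Nat.one_le_two_pow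
      have h2 : (2:ℕ)^(M+1) = 2^M * 2 := pow_succ 2 M
      omega

lemma six_le_two_pow' (m : ℕ) : m + 6 ≤ 2 ^ (m + 3) := by
  induction m with
  | zero => norm_num
  | succ m ih =>
      have : (2:ℕ)^(m+1+3) = 2^(m+3)*2 := pow_succ 2 (m+3)
      omega

lemma factorial_le_two_pow' (m : ℕ) : (m + 5).factorial ≤ 2 ^ 2 ^ (m + 3) := by
  induction m with
  | zero => decide
  | succ m ih =>
      have h1 : m + 6 ≤ 2 ^ (m+3) := six_le_two_pow' m
      have h15 : m + 3 ≤ 2^(m+3) := by omega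
      have h2 : (2:ℕ) ^ (m+3) ≤ 2 ^ 2 ^ (m+3) := Nat.pow_le_pow_right (by norm_num) h15
      calc (m + 1 + 5).factorial = (m+6) * (m+5).factorial := rfl
      _ ≤ 2 ^ 2^(m+3) * 2 ^ 2^(m+3) := Nat.mul_le_mul (h1.trans h2) ih
      _ = 2 ^ (2^(m+3) + 2^(m+3)) := (pow_add 2 _ _).symm
      _ = 2 ^ 2 ^ (m+1+3) := by
          congr 1
          have : (2:ℕ)^(m+1+3) = 2^(m+3)*2 := pow_succ 2 (m+3)
          omega

lemma abel_tsum' {b : ℝ≥0∞} (hb1 : 1 < b) (hbt : b ≠ ⊤) (u d g : ℕ → ℝ≥0∞)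
    (hu : ∀ n, u (n+1) = b * u n) (F : ℝ≥0∞)
    (hA : ∀ n, g n + u n * d n ≤ F)
    (hB : ∀ n, g n + u n * d n ≤ g (n+1) + u n * d (n+1)) :
    ∑' n, u n * d n ≤ (b * (b - 1)⁻¹) * F := by
  set c := b * (b-1)⁻¹ with hc
  have hbm0 : b - 1 ≠ 0 := by simpa [tsub_eq_zero_iff_le] using not_le.mpr hb1
  have hbmt : b - 1 ≠ ⊤ := (lt_of_le_of_lt tsub_le_self (lt_top_iff_ne_top.mpr hbt)).ne
  have hcb : c + b = c * b := by
    have h1 : c * (b - 1) = b := by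
      rw [hc, mul_assoc, ENNReal.inv_mul_cancel hbm0 hbmt, mul_one]
    have h2 : (b - 1) + 1 = b := tsub_add_cancel_of_le hb1.le
    calc c + b = c + c * (b-1) := by rw [h1]
    _ = c * (1 + (b-1)) := by rw [mul_add, mul_one]
    _ = c * b := by rw [add_comm, h2]
  have hc1 : 1 ≤ c := by
    have h := mul_le_mul_left (tsub_le_self (a := b) (b := 1)) (b-1)⁻¹
    rwa [ENNReal.mul_inv_cancel hbm0 hbmt] at h
  have key : ∀ N, ∑ n ∈ Finset.range (N+1), u n * d n + c * g 0 ≤ c * (g N + u N * d N) := by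
    intro N
    induction N with
    | zero =>
        simp only [zero_add, Finset.sum_range_one]
        rw [mul_add, add_comm]
        exact add_le_add_right (le_mul_of_one_le_left zero_le hc1) _
    | succ N ih =>
        rw [Finset.sum_range_succ]
        calc ∑ n ∈ Finset.range (N+1), u n * d n + u (N+1) * d (N+1) + c * g 0
            = (∑ n ∈ Finset.range (N+1), u n * d n + c * g 0) + u (N+1) * d (N+1) := by ring
        _ ≤ c * (g N + u N * d N) + u (N+1) * d (N+1) := add_le_add_left ih _
        _ ≤ c * (g (N+1) + u N * d (N+1)) + u (N+1) * d (N+1) :=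
            add_le_add_left (mul_le_mul_right (hB N) _) _
        _ = c * g (N+1) + (c + b) * (u N * d (N+1)) := by rw [hu N]; ring
        _ = c * g (N+1) + (c * b) * (u N * d (N+1)) := by rw [hcb]
        _ = c * (g (N+1) + u (N+1) * d (N+1)) := by rw [hu N]; ring
  refine ENNReal.tsum_le_of_sum_range_le fun N => ?_
  cases N with
  | zero => rw [Finset.sum_range_zero]; exact zero_le
  | succ N =>
      calc ∑ n ∈ Finset.range (N+1), u n * d n
          ≤ ∑ n ∈ Finset.range (N+1), u n * d n + c * g 0 := le_self_add
      _ ≤ c * (g N + u N * d N) := key N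
      _ ≤ c * F := mul_le_mul_right (hA N) c

lemma eDiam_le' {X : Type u} {D : X → X → ℝ≥0∞} {A : Set X} {c : ℝ≥0∞}
    (h : ∀ y ∈ A, ∀ z ∈ A, D y z ≤ c) : eDiam D A ≤ c :=
  iSup₂_le fun y hy => iSup₂_le (h y hy)

def Admissible.triv {X : Type u} (T : Set X) : Admissible T where
  piece _ _ := T
  self_mem _ _ hx := hx
  subset_base _ _ _ := subset_rfl
  partition _ _ _ _ _ _ := rfl
  finite_pieces _ := Set.Finite.subset (Set.finite_singleton T)
    (by rintro A ⟨x, hx, rfl⟩; exact Set.mem_singleton T)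
  card_pieces n := by
    have h1 : {A : Set X | ∃ x ∈ T, T = A}.ncard ≤ 1 := by
      refine le_trans (Set.ncard_le_ncard ?_ (Set.finite_singleton T)) ?_
      · rintro A ⟨x, hx, rfl⟩; exact Set.mem_singleton T
      · simp
    have h2 : (1:ℕ) < 2 ^ 2 ^ n :=
      Nat.one_lt_two_pow (by positivity)
    exact lt_of_le_of_lt h1 h2
  nested _ _ _ := subset_rfl

def classPiece {X : Type u} (T : Set X) (v : ℕ → X → X) (jcl : ℕ → X → ℕ)
    (n : ℕ) (x : X) : Set X :=
  if 4 ≤ n then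
    {y | y ∈ T ∧ (∀ k, k + 2 ≤ n → v k y = v k x) ∧ (∀ k ≤ n, jcl k y = jcl k x)}
  else T

lemma classAdmissible {X : Type u} (T : Set X) (x₀ : X) (v : ℕ → X → X) (jcl : ℕ → X → ℕ)
    (Sn : ℕ → Finset X) (hv : ∀ n, ∀ x ∈ T, v n x ∈ Sn n) (hjle : ∀ n x, jcl n x ≤ n)
    (hcard : ∀ n, (Sn n).card < 2 ^ 2 ^ n) :
    ∃ P : Admissible T, P.piece = classPiece T v jcl := by
  classical
  have hcount : ∀ n, {A : Set X | ∃ x ∈ T, classPiece T v jcl n x = A}.Finite ∧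
      {A : Set X | ∃ x ∈ T, classPiece T v jcl n x = A}.ncard < 2 ^ 2 ^ n := by
    intro n
    by_cases h4 : 4 ≤ n
    · obtain ⟨m, rfl⟩ : ∃ m, n = m + 4 := ⟨n - 4, by omega⟩
      set Φ : X → (Fin (m+5) → X) × (Fin (m+5) → ℕ) := fun x =>
        (fun k => if (k:ℕ) + 2 ≤ m + 4 then v (k:ℕ) x else x₀, fun k => jcl (k:ℕ) x) with hΦ
      have hpcΦ : ∀ x, classPiece T v jcl (m+4) x = {y | y ∈ T ∧ Φ y = Φ x} := by
        intro x
        ext y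
        simp only [classPiece, if_pos (show 4 ≤ m + 4 by omega), Set.mem_setOf_eq, hΦ,
          Prod.mk.injEq, funext_iff]
        constructor
        · rintro ⟨hyT, h1, h2⟩
          refine ⟨hyT, fun k => ?_, fun k => h2 (k:ℕ) (Nat.lt_succ_iff.mp k.isLt)⟩
          by_cases hk : (k:ℕ) + 2 ≤ m + 4
          · simp only [if_pos hk]; exact h1 (k:ℕ) hk
          · simp only [if_neg hk]
        · rintro ⟨hyT, h1, h2⟩
          refine ⟨hyT, fun k hk => ?_, fun k hk => h2 ⟨k, by omega⟩⟩
          have := h1 ⟨k, by omega⟩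
          simpa only [if_pos hk] using this
      set SF1 : Fin (m+5) → Finset X := fun k =>
        if (k:ℕ) + 2 ≤ m + 4 then Sn (k:ℕ) else {x₀} with hSF1
      set SF2 : Fin (m+5) → Finset ℕ := fun k => Finset.range ((k:ℕ)+1) with hSF2
      set Q : Finset ((Fin (m+5) → X) × (Fin (m+5) → ℕ)) :=
        (Fintype.piFinset SF1) ×ˢ (Fintype.piFinset SF2) with hQ
      have hΦQ : ∀ x ∈ T, Φ x ∈ Q := by
        intro x hx
        rw [hQ, Finset.mem_product]
        constructor
        · rw [Fintype.mem_piFinset]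
          intro k
          rw [hΦ, hSF1]
          by_cases hk : (k:ℕ) + 2 ≤ m + 4
          · simp only [if_pos hk]; exact hv (k:ℕ) x hx
          · simp only [if_neg hk, Finset.mem_singleton]
        · rw [Fintype.mem_piFinset]
          intro k
          simp only [hΦ, hSF2, Finset.mem_range, Nat.lt_succ_iff]
          exact hjle (k:ℕ) x
      have himg_fin : (Φ '' T).Finite :=
        Set.Finite.subset Q.finite_toSet (by rintro w ⟨x, hx, rfl⟩; exact hΦQ x hx)
      have hsub : {A : Set X | ∃ x ∈ T, classPiece T v jcl (m+4) x = A} ⊆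
          (fun w => {y | y ∈ T ∧ Φ y = w}) '' (Φ '' T) := by
        rintro A ⟨x, hx, rfl⟩
        exact ⟨Φ x, ⟨x, hx, rfl⟩, (hpcΦ x).symm⟩
      have hfin : {A : Set X | ∃ x ∈ T, classPiece T v jcl (m+4) x = A}.Finite :=
        Set.Finite.subset (himg_fin.image _) hsub
      refine ⟨hfin, ?_⟩
      have hle1 : {A : Set X | ∃ x ∈ T, classPiece T v jcl (m+4) x = A}.ncard ≤
          ((fun w => {y | y ∈ T ∧ Φ y = w}) '' (Φ '' T)).ncard :=
        Set.ncard_le_ncard hsub (himg_fin.image _)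
      have hle2 : ((fun w => {y | y ∈ T ∧ Φ y = w}) '' (Φ '' T)).ncard ≤ (Φ '' T).ncard :=
        Set.ncard_image_le himg_fin
      have hle3 : (Φ '' T).ncard ≤ Q.card := by
        have hsub2 : Φ '' T ⊆ (Q : Set _) := by rintro w ⟨x, hx, rfl⟩; exact hΦQ x hx
        calc (Φ '' T).ncard ≤ ((Q : Set _)).ncard := Set.ncard_le_ncard hsub2 Q.finite_toSet
        _ = Q.card := Set.ncard_coe_finset Q
      have hc2 : ∏ k : Fin (m+5), (SF2 k).card = (m+5).factorial := by
        simp only [hSF2, Finset.card_range]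
        rw [Fin.prod_univ_eq_prod_range (fun k => k + 1) (m+5)]
        exact Finset.prod_range_add_one_eq_factorial (m+5)
      have hc1 : ∏ k : Fin (m+5), (SF1 k).card ≤ 2 ^ (2 ^ (m+3) - 1) := by
        have e1 : ∏ k : Fin (m+5), (SF1 k).card =
            ∏ k ∈ Finset.range (m+5), (if k + 2 ≤ m + 4 then Sn k else {x₀}).card := by
          simp only [hSF1]
          exact Fin.prod_univ_eq_prod_range (fun k => (if k + 2 ≤ m + 4 then Sn k else {x₀}).card) (m+5)
        rw [e1]
        calc ∏ k ∈ Finset.range (m+5), (if k + 2 ≤ m + 4 then Sn k else {x₀}).card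
            ≤ ∏ k ∈ Finset.range (m+5), (if k + 2 ≤ m + 4 then 2 ^ 2 ^ k else 1) := by
              refine Finset.prod_le_prod' fun k _ => ?_
              split_ifs
              · exact (hcard k).le
              · simp
        _ = ∏ k ∈ Finset.range (m+3), (if k + 2 ≤ m + 4 then 2 ^ 2 ^ k else 1) := by
              rw [Finset.prod_range_succ, Finset.prod_range_succ,
                if_neg (by omega), if_neg (by omega), mul_one, mul_one]
        _ = ∏ k ∈ Finset.range (m+3), 2 ^ 2 ^ k := by
              refine Finset.prod_congr rfl fun k hk => ?_
              rw [Finset.mem_range] at hk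
              exact if_pos (by omega)
        _ = 2 ^ (∑ k ∈ Finset.range (m+3), 2 ^ k) := Finset.prod_pow_eq_pow_sum _ _ _
        _ = 2 ^ (2 ^ (m+3) - 1) := by rw [sum_two_pow']
      have hQcard : Q.card ≤ 2 ^ (2 ^ (m+3) - 1) * (m+5).factorial := by
        rw [hQ, Finset.card_product, Fintype.card_piFinset, Fintype.card_piFinset, hc2]
        exact Nat.mul_le_mul_right _ hc1
      have hfinal : 2 ^ (2 ^ (m+3) - 1) * (m+5).factorial < 2 ^ 2 ^ (m+4) := by
        have h1 : (m+5).factorial ≤ 2 ^ 2 ^ (m+3) := factorial_le_two_pow' m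
        have h2 : 2 ^ (2 ^ (m+3) - 1) * (m+5).factorial ≤
            2 ^ (2 ^ (m+3) - 1) * 2 ^ 2 ^ (m+3) := Nat.mul_le_mul_left _ h1
        have h3 : (2:ℕ) ^ (2 ^ (m+3) - 1) * 2 ^ 2 ^ (m+3) = 2 ^ (2 ^ (m+3) - 1 + 2 ^ (m+3)) :=
          (pow_add 2 _ _).symm
        have h4 : 2 ^ (m+3) - 1 + 2 ^ (m+3) < 2 ^ (m+4) := by
          have h5 : (1:ℕ) ≤ 2 ^ (m+3) := Nat.one_le_two_pow
          have h6 : (2:ℕ) ^ (m+4) = 2 ^ (m+3) * 2 := pow_succ 2 (m+3)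
          omega
        exact lt_of_le_of_lt (h2.trans_eq h3) (Nat.pow_lt_pow_right one_lt_two h4)
      exact lt_of_le_of_lt (hle1.trans (hle2.trans (hle3.trans hQcard))) hfinal
    · have hsub : {A : Set X | ∃ x ∈ T, classPiece T v jcl n x = A} ⊆ {T} := by
        rintro A ⟨x, hx, rfl⟩
        simp only [classPiece, if_neg h4]
        exact Set.mem_singleton T
      refine ⟨Set.Finite.subset (Set.finite_singleton T) hsub, ?_⟩
      have h1 : {A : Set X | ∃ x ∈ T, classPiece T v jcl n x = A}.ncard ≤ 1 := by
        refine le_trans (Set.ncard_le_ncard hsub (Set.finite_singleton T)) (by simp)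
      exact lt_of_le_of_lt h1 (Nat.one_lt_two_pow (by positivity))
  refine ⟨⟨classPiece T v jcl, ?_, ?_, ?_, fun n => (hcount n).1, fun n => (hcount n).2, ?_⟩, rfl⟩
  · intro n x hx
    unfold classPiece
    split_ifs
    · exact ⟨hx, fun k _ => rfl, fun k _ => rfl⟩
    · exact hx
  · intro n x hx
    unfold classPiece
    split_ifs
    · exact fun y hy => hy.1
    · exact subset_rfl
  · intro n x hx y hy hmem
    unfold classPiece at *
    split_ifs at * with h4
    · obtain ⟨hyT, hv1, hj1⟩ := hmem
      ext z
      simp only [Set.mem_setOf_eq]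
      constructor
      · rintro ⟨hzT, a1, a2⟩
        exact ⟨hzT, fun k hk => (a1 k hk).trans (hv1 k hk), fun k hk => (a2 k hk).trans (hj1 k hk)⟩
      · rintro ⟨hzT, a1, a2⟩
        exact ⟨hzT, fun k hk => (a1 k hk).trans (hv1 k hk).symm,
          fun k hk => (a2 k hk).trans (hj1 k hk).symm⟩
    · rfl
  · intro n x hx
    unfold classPiece
    by_cases h4 : 4 ≤ n
    · rw [if_pos (by omega), if_pos h4]
      rintro y ⟨hyT, h1, h2⟩
      exact ⟨hyT, fun k hk => h1 k (by omega), fun k hk => h2 k (by omega)⟩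
    · by_cases h5 : 4 ≤ n + 1
      · rw [if_pos h5, if_neg h4]
        exact fun y hy => hy.1
      · rw [if_neg h5, if_neg h4]

/-- **Basic interpolation bound** (Theorem 4.7): if `π_t(x)` minimizes
`y ↦ f(y) + t·d(x,y)` for every `t ≥ 0`, `x ∈ T`, and `K_t = π_t(T)`, then
`γ_α(T) ≤ C ((1/a)·sup_{x∈T} f(x) + Σ_n 2^{n/α} e_n(K_{a·2^{n/α}}))`
for every `a > 0`, with `C` depending only on `α`. -/
theorem interpolation_bound (α : ℝ) (hα : 0 < α) :
    ∃ C : ℝ≥0∞, 0 < C ∧ C ≠ ∞ ∧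
      ∀ (X : Type u) [MetricSpace X] (T : Set X) (f : X → ℝ≥0∞) (π : ℝ≥0 → X → X),
        (∀ (t : ℝ≥0), ∀ x ∈ T, ∀ y : X,
            f (π t x) + (t : ℝ≥0∞) * edist x (π t x) ≤ f y + (t : ℝ≥0∞) * edist x y) →
        ∀ a : ℝ≥0, 0 < a →
          gammaF (edist : X → X → ℝ≥0∞) α 1 T ≤
            C * ((a : ℝ≥0∞)⁻¹ * (⨆ x ∈ T, f x) +
              ∑' n : ℕ, (2 : ℝ≥0∞) ^ ((n : ℝ) / α) *
                entN (edist : X → X → ℝ≥0∞) n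
                  ((π (a * (2 : ℝ≥0) ^ ((n : ℝ) / α))) '' T)) := by
    classical
  set b : ℝ≥0∞ := (2 : ℝ≥0∞) ^ ((1:ℝ)/α) with hbdef
  have hb1 : 1 < b := ENNReal.one_lt_rpow (by norm_num) (by positivity)
  have hbt : b ≠ ⊤ := ENNReal.rpow_ne_top_of_nonneg (by positivity) (by norm_num)
  have hb0 : b ≠ 0 := (zero_lt_one.trans hb1).ne'
  have hbm0 : b - 1 ≠ 0 := by simpa [tsub_eq_zero_iff_le] using not_le.mpr hb1
  set c : ℝ≥0∞ := b * (b - 1)⁻¹ with hcdef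
  have hct : c ≠ ⊤ := ENNReal.mul_ne_top hbt (ENNReal.inv_ne_top.mpr hbm0)
  have hbn : ∀ n : ℕ, (2 : ℝ≥0∞) ^ ((n : ℝ) / α) = b ^ n := by
    intro n
    rw [hbdef, ← ENNReal.rpow_natCast ((2:ℝ≥0∞) ^ ((1:ℝ)/α)) n, ← ENNReal.rpow_mul]
    congr 1
    field_simp
  have hC0 : (16*b^3 + 4*b^2*c + 6*b^2 : ℝ≥0∞) ≠ 0 := by
    intro h
    rw [add_eq_zero, add_eq_zero] at h
    exact (mul_ne_zero (by norm_num) (pow_ne_zero _ hb0)) h.2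
  have hCt : (16*b^3 + 4*b^2*c + 6*b^2 : ℝ≥0∞) ≠ ⊤ := by
    refine ENNReal.add_ne_top.mpr ⟨ENNReal.add_ne_top.mpr ⟨?_, ?_⟩, ?_⟩
    · exact ENNReal.mul_ne_top (by norm_num) (ENNReal.pow_ne_top hbt)
    · exact ENNReal.mul_ne_top (ENNReal.mul_ne_top (by norm_num) (ENNReal.pow_ne_top hbt)) hct
    · exact ENNReal.mul_ne_top (by norm_num) (ENNReal.pow_ne_top hbt)
  refine ⟨16*b^3 + 4*b^2*c + 6*b^2, pos_iff_ne_zero.mpr hC0, hCt, ?_⟩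
  intro X _inst T f π hmin a ha
  simp only [hbn]
  rcases Set.eq_empty_or_nonempty T with rfl | ⟨x₀, hx₀⟩
  · refine le_trans (le_trans (iInf_le _ (Admissible.triv ∅)) ?_) zero_le
    simp [gammaF]
  have hane0 : (a:ℝ≥0∞) ≠ 0 := by exact_mod_cast ha.ne'
  have hane_t : (a:ℝ≥0∞) ≠ ⊤ := ENNReal.coe_ne_top
  set t : ℕ → ℝ≥0 := fun n => a * (2:ℝ≥0) ^ ((n:ℝ)/α) with htdef
  set eps : ℕ → ℝ≥0∞ := fun n => entN (edist : X → X → ℝ≥0∞) n ((π (t n)) '' T) with hepsdef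
  set S := ⨆ x ∈ T, f x with hSdef
  have hrw : ∀ n : ℕ, entN (edist : X → X → ℝ≥0∞) n ((π (a * (2:ℝ≥0) ^ ((n:ℝ)/α))) '' T) = eps n :=
    fun n => by simp only [hepsdef, htdef]
  simp only [hrw]
  set M := (a:ℝ≥0∞)⁻¹ * S + ∑' (n:ℕ), b^n * eps n with hMdef
  by_cases hMtop : M = ⊤
  · rw [hMtop, ENNReal.mul_top hC0]
    exact le_top
  have hsumM : ∑' (j:ℕ), b^j * eps j ≤ M := by rw [hMdef]; exact le_add_self
  have haSM : (a:ℝ≥0∞)⁻¹ * S ≤ M := by rw [hMdef]; exact le_self_add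
  have hSne : S ≠ ⊤ := by
    intro h
    apply hMtop
    rw [hMdef, h, ENNReal.mul_top (ENNReal.inv_ne_zero.mpr hane_t), top_add]
  have hepsne : ∀ n, eps n ≠ ⊤ := by
    intro n h
    apply hMtop
    have h2 : b^n * eps n = ⊤ := by rw [h, ENNReal.mul_top (pow_ne_zero n hb0)]
    have h3 : (⊤:ℝ≥0∞) ≤ M := h2 ▸ (le_trans (ENNReal.le_tsum n) hsumM)
    exact top_le_iff.mp h3
  have hu : ∀ n, ((t n : ℝ≥0) : ℝ≥0∞) = (a:ℝ≥0∞) * b^n := by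
    intro n
    simp only [htdef]
    rw [ENNReal.coe_mul, ENNReal.coe_rpow_of_ne_zero two_ne_zero, ← hbn n]
    norm_num
  have hfA : ∀ n, ∀ x ∈ T, f (π (t n) x) + ((a:ℝ≥0∞) * b^n) * edist x (π (t n) x) ≤ f x := by
    intro n x hx
    have h := hmin (t n) x hx x
    rwa [edist_self, mul_zero, add_zero, hu n] at h
  have hfB : ∀ n, ∀ x ∈ T, f (π (t n) x) + ((a:ℝ≥0∞) * b^n) * edist x (π (t n) x) ≤
      f (π (t (n+1)) x) + ((a:ℝ≥0∞) * b^n) * edist x (π (t (n+1)) x) := by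
    intro n x hx
    have h := hmin (t n) x hx (π (t (n+1)) x)
    rwa [hu n] at h
  have hfS : ∀ x ∈ T, f x ≤ S := by
    intro x hx
    rw [hSdef]
    exact le_iSup₂ (f := fun x _ => f x) x hx
  have habel : ∀ x ∈ T, ∑' (n:ℕ), b^n * edist x (π (t n) x) ≤ c * ((a:ℝ≥0∞)⁻¹ * f x) := by
    intro x hx
    have h := abel_tsum' hb1 hbt (fun n => (a:ℝ≥0∞) * b^n) (fun n => edist x (π (t n) x))
      (fun n => f (π (t n) x)) (fun n => by show (a:ℝ≥0∞) * b^(n+1) = b * ((a:ℝ≥0∞) * b^n); rw [pow_succ]; ring) (f x)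
      (fun n => hfA n x hx) (fun n => hfB n x hx)
    have h2 : ∑' (n:ℕ), ((a:ℝ≥0∞) * b^n) * edist x (π (t n) x)
        = (a:ℝ≥0∞) * ∑' (n:ℕ), b^n * edist x (π (t n) x) := by
      rw [← ENNReal.tsum_mul_left]
      exact tsum_congr fun n => by ring
    rw [h2] at h
    calc ∑' (n:ℕ), b^n * edist x (π (t n) x)
        = (a:ℝ≥0∞)⁻¹ * ((a:ℝ≥0∞) * ∑' (n:ℕ), b^n * edist x (π (t n) x)) := by
          rw [← mul_assoc, ENNReal.inv_mul_cancel hane0 hane_t, one_mul]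
    _ ≤ (a:ℝ≥0∞)⁻¹ * (c * f x) := by rw [hcdef]; exact mul_le_mul_right h _
    _ = c * ((a:ℝ≥0∞)⁻¹ * f x) := by ring
  set B : ℕ → ℝ≥0∞ := fun k => (a:ℝ≥0∞)⁻¹ * (b⁻¹)^k * S with hBdef
  have hdB : ∀ k, ∀ x ∈ T, edist x (π (t k) x) ≤ B k := by
    intro k x hx
    have h1 : ((a:ℝ≥0∞) * b^k) * edist x (π (t k) x) ≤ S :=
      le_trans (le_trans le_add_self (hfA k x hx)) (hfS x hx)
    have hne0 : (a:ℝ≥0∞) * b^k ≠ 0 := mul_ne_zero hane0 (pow_ne_zero _ hb0)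
    have hnet : (a:ℝ≥0∞) * b^k ≠ ⊤ := ENNReal.mul_ne_top hane_t (ENNReal.pow_ne_top hbt)
    have h2 : edist x (π (t k) x) ≤ S / ((a:ℝ≥0∞) * b^k) :=
      (ENNReal.le_div_iff_mul_le (Or.inl hne0) (Or.inl hnet)).mpr (by rw [mul_comm]; exact h1)
    refine le_trans h2 (le_of_eq ?_)
    simp only [hBdef]
    rw [div_eq_mul_inv, ENNReal.mul_inv (Or.inl hane0) (Or.inl hane_t), ENNReal.inv_pow]
    ring
  set jcl : ℕ → X → ℕ := fun k x =>
    Nat.findGreatest (fun j => edist x (π (t k) x) ≤ B k * ((2:ℝ≥0∞)⁻¹)^j) k with hjcldef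
  have hjle : ∀ k x, jcl k x ≤ k := fun k x => by
    simp only [hjcldef]; exact Nat.findGreatest_le k
  have h21 : (2:ℝ≥0∞) * 2⁻¹ = 1 := ENNReal.mul_inv_cancel two_ne_zero ENNReal.ofNat_ne_top
  have hjcl : ∀ k, ∀ x ∈ T, ∀ y ∈ T, jcl k y = jcl k x →
      edist y (π (t k) y) ≤ 2 * edist x (π (t k) x) + B k * ((2:ℝ≥0∞)⁻¹)^k := by
    intro k x hx y hy hj
    have hy0 : edist y (π (t k) y) ≤ B k * ((2:ℝ≥0∞)⁻¹)^0 := by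
      simpa using hdB k y hy
    have hspec : edist y (π (t k) y) ≤ B k * ((2:ℝ≥0∞)⁻¹)^(jcl k y) := by
      have := Nat.findGreatest_spec (P := fun j => edist y (π (t k) y) ≤ B k * ((2:ℝ≥0∞)⁻¹)^j)
        (Nat.zero_le k) hy0
      simpa only [hjcldef] using this
    by_cases hcase : jcl k y = k
    · rw [hcase] at hspec
      exact le_add_left hspec
    · have hlt : jcl k y < k := lt_of_le_of_ne (hjle k y) hcase
      have hgr : ¬ (edist x (π (t k) x) ≤ B k * ((2:ℝ≥0∞)⁻¹)^(jcl k y + 1)) := by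
        have hfg : Nat.findGreatest (fun j => edist x (π (t k) x) ≤ B k * ((2:ℝ≥0∞)⁻¹)^j) k
            < jcl k y + 1 := by
          have : jcl k x = jcl k y := hj.symm ▸ rfl
          simp only [hjcldef] at this ⊢
          omega
        exact Nat.findGreatest_is_greatest hfg (by omega)
      have hge : B k * ((2:ℝ≥0∞)⁻¹)^(jcl k y + 1) ≤ edist x (π (t k) x) := (not_le.mp hgr).le
      have hdbl : B k * ((2:ℝ≥0∞)⁻¹)^(jcl k y) ≤ 2 * edist x (π (t k) x) := by
        have h2 : B k * ((2:ℝ≥0∞)⁻¹)^(jcl k y) = 2 * (B k * ((2:ℝ≥0∞)⁻¹)^(jcl k y + 1)) := by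
          rw [pow_succ]
          calc B k * ((2:ℝ≥0∞)⁻¹)^(jcl k y)
              = (2 * 2⁻¹) * (B k * ((2:ℝ≥0∞)⁻¹)^(jcl k y)) := by rw [h21, one_mul]
          _ = 2 * (B k * (((2:ℝ≥0∞)⁻¹)^(jcl k y) * 2⁻¹)) := by ring
        rw [h2]
        exact mul_le_mul_right hge 2
      exact le_trans hspec (le_trans hdbl le_self_add)
  have hgeo : ∑' (j:ℕ), ((2:ℝ≥0∞)⁻¹)^j = 2 := by
    rw [ENNReal.tsum_geometric, ENNReal.one_sub_inv_two, inv_inv]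
  have heps0M : eps 0 ≤ M := by
    refine le_trans ?_ (le_trans (ENNReal.le_tsum 0) hsumM)
    simp
  -- main estimate, with error parameter θ
  have main : ∀ θ : ℝ≥0∞, θ ≠ 0 →
      gammaF (edist : X → X → ℝ≥0∞) α 1 T ≤
        (16*b^3 + 4*b^2*c + 6*b^2) * M + (8*b^3 + 4*b^2) * θ := by
    intro θ hθ0
    set η : ℕ → ℝ≥0∞ := fun k => θ * ((2:ℝ≥0∞)⁻¹)^k * (b⁻¹)^k with hηdef
    have hη0 : ∀ k, η k ≠ 0 := by
      intro k
      simp only [hηdef]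
      exact mul_ne_zero (mul_ne_zero hθ0 (pow_ne_zero k (ENNReal.inv_ne_zero.mpr ENNReal.ofNat_ne_top)))
        (pow_ne_zero k (ENNReal.inv_ne_zero.mpr hbt))
    have hnets : ∀ n, ∃ Sf : Finset X, Sf.card < 2^2^n ∧
        ∀ x ∈ T, ∃ y, y ∈ Sf ∧ edist (π (t n) x) y ≤ eps n + η n := by
      intro n
      have hlt0 : eps n < eps n + η n := ENNReal.lt_add_right (hepsne n) (hη0 n)
      have hlt : (⨅ (Sf : Finset X) (_ : Sf.card < 2^2^n),
          ⨆ z ∈ (π (t n)) '' T, ⨅ y ∈ Sf, edist z y) < eps n + η n := by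
        refine lt_of_le_of_lt (le_of_eq ?_) hlt0
        simp only [hepsdef, entN]
      obtain ⟨Sf, h1⟩ := iInf_lt_iff.mp hlt
      obtain ⟨hcard, h2⟩ := iInf_lt_iff.mp h1
      refine ⟨Sf, hcard, fun x hx => ?_⟩
      have h3 : (⨅ y ∈ Sf, edist (π (t n) x) y) < eps n + η n :=
        lt_of_le_of_lt (le_iSup₂ (f := fun z (_ : z ∈ (π (t n)) '' T) => ⨅ y ∈ Sf, edist z y)
          (π (t n) x) (Set.mem_image_of_mem _ hx)) h2
      obtain ⟨y, h4⟩ := iInf_lt_iff.mp h3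
      obtain ⟨hy, h5⟩ := iInf_lt_iff.mp h4
      exact ⟨y, hy, h5.le⟩
    choose Sn hScard hSnet using hnets
    have hvex : ∀ (n:ℕ) (x : X), ∃ y, x ∈ T → (y ∈ Sn n ∧ edist (π (t n) x) y ≤ eps n + η n) := by
      intro n x
      by_cases hx : x ∈ T
      · obtain ⟨y, hy1, hy2⟩ := hSnet n x hx
        exact ⟨y, fun _ => ⟨hy1, hy2⟩⟩
      · exact ⟨x₀, fun h => absurd h hx⟩
    choose v hv using hvex
    obtain ⟨P, hP⟩ := classAdmissible T x₀ v jcl Sn (fun n x hx => (hv n x hx).1) hjle hScard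
    set rr : ℕ → ℝ≥0∞ := fun k => eps k + η k with hrrdef
    have hnet2 : ∀ k, ∀ z ∈ T, edist z (v k z) ≤ edist z (π (t k) z) + rr k := by
      intro k z hz
      refine le_trans (edist_triangle _ (π (t k) z) _) (add_le_add_right ?_ _)
      simp only [hrrdef]
      exact (hv k z hz).2
    have hDT : eDiam (edist : X → X → ℝ≥0∞) T ≤ 2 * (B 0 + rr 0) := by
      refine eDiam_le' fun y hy z hz => ?_
      have hv0 : v 0 y = v 0 z := by
        have hcard0 : (Sn 0).card ≤ 1 := by
          have := hScard 0
          simp only [pow_zero, pow_one] at this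
          omega
        exact Finset.card_le_one.mp hcard0 _ (hv 0 y hy).1 _ (hv 0 z hz).1
      calc edist y z ≤ edist y (v 0 y) + edist (v 0 y) z := edist_triangle _ _ _
      _ = edist y (v 0 y) + edist z (v 0 z) := by rw [hv0, edist_comm (v 0 z) z]
      _ ≤ (edist y (π (t 0) y) + rr 0) + (edist z (π (t 0) z) + rr 0) :=
          add_le_add (hnet2 0 y hy) (hnet2 0 z hz)
      _ ≤ (B 0 + rr 0) + (B 0 + rr 0) :=
          add_le_add (add_le_add_left (hdB 0 y hy) _) (add_le_add_left (hdB 0 z hz) _)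
      _ = 2 * (B 0 + rr 0) := (two_mul _).symm
    have hdiam : ∀ k x, x ∈ T → eDiam (edist : X → X → ℝ≥0∞) (P.piece (k+4) x) ≤
        4 * edist x (π (t (k+2)) x) + 2 * (B (k+2) * ((2:ℝ≥0∞)⁻¹)^(k+2)) + 2 * rr (k+2) := by
      intro k x hx
      rw [hP]
      refine eDiam_le' fun y hy z hz => ?_
      simp only [classPiece, if_pos (show 4 ≤ k + 4 by omega), Set.mem_setOf_eq] at hy hz
      obtain ⟨hyT, hyv, hyj⟩ := hy
      obtain ⟨hzT, hzv, hzj⟩ := hz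
      have hyx : v (k+2) y = v (k+2) x := hyv (k+2) (by omega)
      have hzx : v (k+2) z = v (k+2) x := hzv (k+2) (by omega)
      have hdy : edist y (π (t (k+2)) y) ≤ 2 * edist x (π (t (k+2)) x) + B (k+2) * ((2:ℝ≥0∞)⁻¹)^(k+2) :=
        hjcl (k+2) x hx y hyT (hyj (k+2) (by omega))
      have hdz : edist z (π (t (k+2)) z) ≤ 2 * edist x (π (t (k+2)) x) + B (k+2) * ((2:ℝ≥0∞)⁻¹)^(k+2) :=
        hjcl (k+2) x hx z hzT (hzj (k+2) (by omega))
      calc edist y z ≤ edist y (v (k+2) y) + edist (v (k+2) y) z := edist_triangle _ _ _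
      _ = edist y (v (k+2) y) + edist z (v (k+2) z) := by rw [hyx, ← hzx, edist_comm (v (k+2) z) z]
      _ ≤ (edist y (π (t (k+2)) y) + rr (k+2)) + (edist z (π (t (k+2)) z) + rr (k+2)) :=
          add_le_add (hnet2 (k+2) y hyT) (hnet2 (k+2) z hzT)
      _ ≤ ((2 * edist x (π (t (k+2)) x) + B (k+2) * ((2:ℝ≥0∞)⁻¹)^(k+2)) + rr (k+2))
            + ((2 * edist x (π (t (k+2)) x) + B (k+2) * ((2:ℝ≥0∞)⁻¹)^(k+2)) + rr (k+2)) :=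
          add_le_add (add_le_add_left hdy _) (add_le_add_left hdz _)
      _ = 4 * edist x (π (t (k+2)) x) + 2 * (B (k+2) * ((2:ℝ≥0∞)⁻¹)^(k+2)) + 2 * rr (k+2) := by
          ring
    have hptsum : ∀ x ∈ T, ∑' (n:ℕ), b^n * eDiam (edist : X → X → ℝ≥0∞) (P.piece n x) ≤
        (16*b^3 + 4*b^2*c + 6*b^2) * M + (8*b^3 + 4*b^2) * θ := by
      intro x hx
      have hsplit := Summable.sum_add_tsum_nat_add'
        (f := fun n => b^n * eDiam (edist : X → X → ℝ≥0∞) (P.piece n x)) (k := 4) ENNReal.summable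
      rw [← hsplit]
      have hE0M : 2 * (B 0 + rr 0) ≤ 4*M + 2*θ := by
        have hB0 : B 0 ≤ M := by
          refine le_trans (le_of_eq ?_) haSM
          simp only [hBdef]
          simp
        have hη0θ : η 0 = θ := by simp only [hηdef]; simp
        have hrr0 : rr 0 ≤ M + θ := by
          simp only [hrrdef]
          exact add_le_add heps0M (le_of_eq hη0θ)
        calc 2 * (B 0 + rr 0) ≤ 2 * (M + (M + θ)) :=
            mul_le_mul_right (add_le_add hB0 hrr0) 2
        _ = 4*M + 2*θ := by ring
      have hhead : ∑ i ∈ Finset.range 4, b^i * eDiam (edist : X → X → ℝ≥0∞) (P.piece i x)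
          ≤ 4 * (b^3 * (2 * (B 0 + rr 0))) := by
        have hterm : ∀ i ∈ Finset.range 4,
            b^i * eDiam (edist : X → X → ℝ≥0∞) (P.piece i x) ≤ b^3 * (2 * (B 0 + rr 0)) := by
          intro i hi
          rw [Finset.mem_range] at hi
          have hpT : P.piece i x = T := by
            rw [hP]; simp only [classPiece, if_neg (show ¬ (4 ≤ i) by omega)]
          rw [hpT]
          exact mul_le_mul' (pow_le_pow_right₀ hb1.le (by omega)) hDT
        calc ∑ i ∈ Finset.range 4, b^i * eDiam (edist : X → X → ℝ≥0∞) (P.piece i x)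
            ≤ ∑ _i ∈ Finset.range 4, b^3 * (2 * (B 0 + rr 0)) := Finset.sum_le_sum hterm
        _ = 4 * (b^3 * (2 * (B 0 + rr 0))) := by
            rw [Finset.sum_const, Finset.card_range, nsmul_eq_mul]
            norm_num
      have htail : ∑' (i:ℕ), b^(i+4) * eDiam (edist : X → X → ℝ≥0∞) (P.piece (i+4) x) ≤
          b^2 * ∑' (j:ℕ), b^j * (4 * edist x (π (t j) x)
            + 2 * (B j * ((2:ℝ≥0∞)⁻¹)^j) + 2 * rr j) := by
        have hterm : ∀ i:ℕ, b^(i+4) * eDiam (edist : X → X → ℝ≥0∞) (P.piece (i+4) x) ≤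
            b^2 * (b^(i+2) * (4 * edist x (π (t (i+2)) x)
              + 2 * (B (i+2) * ((2:ℝ≥0∞)⁻¹)^(i+2)) + 2 * rr (i+2))) := by
          intro i
          have hpow : b^(i+4) = b^2 * b^(i+2) := by
            rw [← pow_add]
            congr 1
            omega
          calc b^(i+4) * eDiam (edist : X → X → ℝ≥0∞) (P.piece (i+4) x)
              ≤ b^(i+4) * (4 * edist x (π (t (i+2)) x)
                + 2 * (B (i+2) * ((2:ℝ≥0∞)⁻¹)^(i+2)) + 2 * rr (i+2)) :=
              mul_le_mul_right (hdiam i x hx) _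
          _ = b^2 * (b^(i+2) * (4 * edist x (π (t (i+2)) x)
                + 2 * (B (i+2) * ((2:ℝ≥0∞)⁻¹)^(i+2)) + 2 * rr (i+2))) := by
              rw [hpow]; ring
        calc ∑' (i:ℕ), b^(i+4) * eDiam (edist : X → X → ℝ≥0∞) (P.piece (i+4) x)
            ≤ ∑' (i:ℕ), b^2 * (b^(i+2) * (4 * edist x (π (t (i+2)) x)
              + 2 * (B (i+2) * ((2:ℝ≥0∞)⁻¹)^(i+2)) + 2 * rr (i+2))) := ENNReal.tsum_le_tsum hterm
        _ = b^2 * ∑' (i:ℕ), (fun j => b^j * (4 * edist x (π (t j) x)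
              + 2 * (B j * ((2:ℝ≥0∞)⁻¹)^j) + 2 * rr j)) (i+2) := ENNReal.tsum_mul_left
        _ ≤ b^2 * ∑' (j:ℕ), b^j * (4 * edist x (π (t j) x)
              + 2 * (B j * ((2:ℝ≥0∞)⁻¹)^j) + 2 * rr j) :=
            mul_le_mul_right (ENNReal.tsum_comp_le_tsum_of_injective (add_left_injective 2) _) _
      have hphi : ∑' (j:ℕ), b^j * (4 * edist x (π (t j) x)
          + 2 * (B j * ((2:ℝ≥0∞)⁻¹)^j) + 2 * rr j) ≤ (4*c + 6)*M + 4*θ := by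
        have hbbj : ∀ j:ℕ, b^j * (b⁻¹)^j = 1 := fun j => by
          rw [← mul_pow, ENNReal.mul_inv_cancel hb0 hbt, one_pow]
        have hexp : ∀ j:ℕ, b^j * (4 * edist x (π (t j) x)
            + 2 * (B j * ((2:ℝ≥0∞)⁻¹)^j) + 2 * rr j) =
            4 * (b^j * edist x (π (t j) x)) + (2*((a:ℝ≥0∞)⁻¹*S)) * ((2:ℝ≥0∞)⁻¹)^j
              + (2 * (b^j * eps j) + (2*θ) * ((2:ℝ≥0∞)⁻¹)^j) := by
          intro j
          simp only [hBdef, hrrdef, hηdef]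
          calc b^j * (4 * edist x (π (t j) x)
              + 2 * (((a:ℝ≥0∞)⁻¹ * (b⁻¹)^j * S) * ((2:ℝ≥0∞)⁻¹)^j)
              + 2 * (eps j + θ * ((2:ℝ≥0∞)⁻¹)^j * (b⁻¹)^j)) =
              4 * (b^j * edist x (π (t j) x))
              + (2*((a:ℝ≥0∞)⁻¹*S)) * ((2:ℝ≥0∞)⁻¹)^j * (b^j * (b⁻¹)^j)
              + (2 * (b^j * eps j) + (2*θ) * ((2:ℝ≥0∞)⁻¹)^j * (b^j * (b⁻¹)^j)) := by ring
          _ = _ := by rw [hbbj j, mul_one, mul_one]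
        rw [tsum_congr hexp]
        simp only [ENNReal.tsum_add, ENNReal.tsum_mul_left, hgeo]
        have h1 : ∑' (j:ℕ), b^j * edist x (π (t j) x) ≤ c * M :=
          le_trans (habel x hx) (mul_le_mul_right
            (le_trans (mul_le_mul_right (hfS x hx) _) haSM) c)
        calc 4 * (∑' (j:ℕ), b^j * edist x (π (t j) x)) + (2*((a:ℝ≥0∞)⁻¹*S)) * 2
              + (2 * (∑' (j:ℕ), b^j * eps j) + (2*θ) * 2)
            ≤ 4 * (c*M) + (2*M) * 2 + (2*M + (2*θ)*2) := by
              refine add_le_add (add_le_add (mul_le_mul_right h1 4) ?_)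
                (add_le_add (mul_le_mul_right hsumM 2) le_rfl)
              exact mul_le_mul_left (mul_le_mul_right haSM 2) 2
        _ = (4*c + 6)*M + 4*θ := by ring
      calc (∑ i ∈ Finset.range 4, b^i * eDiam (edist : X → X → ℝ≥0∞) (P.piece i x))
            + ∑' (i:ℕ), b^(i+4) * eDiam (edist : X → X → ℝ≥0∞) (P.piece (i+4) x)
          ≤ 4 * (b^3 * (2 * (B 0 + rr 0))) + b^2 * ((4*c + 6)*M + 4*θ) :=
            add_le_add hhead (le_trans htail (mul_le_mul_right hphi _))
      _ ≤ 4 * (b^3 * (4*M + 2*θ)) + b^2 * ((4*c + 6)*M + 4*θ) := by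
            refine add_le_add (mul_le_mul_right (mul_le_mul_right hE0M _) _) le_rfl
      _ = (16*b^3 + 4*b^2*c + 6*b^2) * M + (8*b^3 + 4*b^2) * θ := by ring
    calc gammaF (edist : X → X → ℝ≥0∞) α 1 T
        ≤ (⨆ x ∈ T, ∑' (n:ℕ), ((2:ℝ≥0∞)^((n:ℝ)/α)
            * eDiam (edist : X → X → ℝ≥0∞) (P.piece n x)) ^ (1:ℝ)) ^ (1:ℝ)⁻¹ := by
          rw [gammaF]
          exact iInf_le _ P
    _ = ⨆ x ∈ T, ∑' (n:ℕ), b^n * eDiam (edist : X → X → ℝ≥0∞) (P.piece n x) := by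
          simp only [inv_one, ENNReal.rpow_one, hbn]
    _ ≤ (16*b^3 + 4*b^2*c + 6*b^2) * M + (8*b^3 + 4*b^2) * θ := iSup₂_le hptsum
  refine ENNReal.le_of_forall_pos_le_add fun ε hε hlt => ?_
  have hK20 : (8*b^3 + 4*b^2 : ℝ≥0∞) ≠ 0 := by
    intro h
    rw [add_eq_zero] at h
    exact (mul_ne_zero (by norm_num) (pow_ne_zero _ hb0)) h.2
  have hK2t : (8*b^3 + 4*b^2 : ℝ≥0∞) ≠ ⊤ :=
    ENNReal.add_ne_top.mpr ⟨ENNReal.mul_ne_top (by norm_num) (ENNReal.pow_ne_top hbt),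
      ENNReal.mul_ne_top (by norm_num) (ENNReal.pow_ne_top hbt)⟩
  have hθ0 : (ε:ℝ≥0∞) * (8*b^3 + 4*b^2)⁻¹ ≠ 0 :=
    mul_ne_zero (by exact_mod_cast hε.ne') (ENNReal.inv_ne_zero.mpr hK2t)
  refine le_trans (main _ hθ0) (le_of_eq ?_)
  congr 1
  rw [mul_comm (ε:ℝ≥0∞), ← mul_assoc, ENNReal.mul_inv_cancel hK20 hK2t, one_mul]
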